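/- For m ≥ 2, a nonzero digit y, a word w with nonzero first letter, and 0 ≤ r < m^k with k ≥ |w|: e_{m;w}(r + y·m^k) = e_{m;w}(r) + 1 if and only if y = w[0] and the base-m expansion of r, padded with leading zeros to length k, has w[1]...w[|w|-1] as a prefix; equivalently, α_w·m^k ≤ r < β_w·m^k where α_w = (w[1..|w|-1])_m / m^{|w|-1} and β_w = ((w[1..|w|-1])_m + 1) / m^{|w|-1}. -/

import Mathlib

/-- Number of occurrences of the word `w` as a factor of the word `x`. -/
def occCount (w x : List ℕ) : ℕ :=
  (List.range (x.length + 1)).countP (fun i => decide (w <+: x.drop i))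

/-- Base-`m` expansion of `n`, most significant digit first, with `0` written as the digit `0`. -/
def baseExp (m n : ℕ) : List ℕ :=
  if n = 0 then [0] else (Nat.digits m n).reverse

/-- `e_{m;w}(n)`: number of occurrences of `w` in the base-`m` expansion of `n`. -/
def eCount (m : ℕ) (w : List ℕ) (n : ℕ) : ℕ := occCount w (baseExp m n)

/-- `a_{m;w}(n) = e_{m;w}(n) mod m`. -/
def aSeq (m : ℕ) (w : List ℕ) (n : ℕ) : ℕ := eCount m w n % m

/-- The value `(w)_m` of the digit string `w` in base `m`. -/
def wordVal (m : ℕ) (w : List ℕ) : ℕ := w.foldl (fun acc d => acc * m + d) 0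

/-- The finite word `v` is a prefix of the infinite sequence `s`. -/
def IsPrefixSeq (v : List ℕ) (s : ℕ → ℕ) : Prop := ∀ n < v.length, s n = v.getD n 0

lemma foldl_val (m : ℕ) : ∀ (b : List ℕ) (c : ℕ),
    b.foldl (fun acc d => acc * m + d) c
      = c * m ^ b.length + b.foldl (fun acc d => acc * m + d) 0 := by
  intro b
  induction b with
  | nil => intro c; simp
  | cons a b ih =>
    intro c
    simp only [List.foldl_cons, List.length_cons]
    rw [ih (c * m + a), ih (0 * m + a)]
    ring

lemma wordVal_cons (m a : ℕ) (b : List ℕ) :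
    wordVal m (a :: b) = a * m ^ b.length + wordVal m b := by
  simp only [wordVal, List.foldl_cons]
  rw [foldl_val]
  ring

lemma wordVal_append (m : ℕ) (a b : List ℕ) :
    wordVal m (a ++ b) = wordVal m a * m ^ b.length + wordVal m b := by
  simp only [wordVal, List.foldl_append]
  rw [foldl_val]

lemma wordVal_lt (m : ℕ) (hm : 1 ≤ m) : ∀ (l : List ℕ), (∀ d ∈ l, d < m) →
    wordVal m l < m ^ l.length := by
  intro l
  induction l with
  | nil => intro _; simp [wordVal]
  | cons a l ih =>
    intro h
    rw [wordVal_cons]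
    have ha : a + 1 ≤ m := h a (by simp)
    have h2 : wordVal m l < m ^ l.length := ih fun d hd => h d (by simp [hd])
    calc a * m ^ l.length + wordVal m l < (a + 1) * m ^ l.length := by
            rw [add_one_mul]; omega
      _ ≤ m * m ^ l.length := Nat.mul_le_mul_right _ ha
      _ = m ^ (a :: l).length := by rw [List.length_cons, pow_succ]; ring

lemma wordVal_replicate_zero (m z : ℕ) : wordVal m (List.replicate z 0) = 0 := by
  induction z with
  | zero => simp [wordVal]
  | succ z ih => rw [List.replicate_succ, wordVal_cons, ih]; simp

lemma wordVal_reverse (m : ℕ) : ∀ (l : List ℕ), wordVal m l.reverse = Nat.ofDigits m l := by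
  intro l
  induction l with
  | nil => simp [wordVal]
  | cons a l ih =>
    rw [List.reverse_cons, wordVal_append, ih, Nat.ofDigits_cons]
    have : wordVal m [a] = a := by simp [wordVal]
    rw [this]
    simp
    ring

lemma wordVal_inj (m : ℕ) (hm : 1 ≤ m) : ∀ (l1 l2 : List ℕ), (∀ d ∈ l1, d < m) →
    (∀ d ∈ l2, d < m) → l1.length = l2.length → wordVal m l1 = wordVal m l2 → l1 = l2 := by
  intro l1
  induction l1 with
  | nil => intro l2 _ _ hlen _; exact (List.length_eq_zero_iff.mp hlen.symm).symm
  | cons a l1 ih =>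
    intro l2 h1 h2 hlen hv
    cases l2 with
    | nil => simp at hlen
    | cons b l2 =>
      simp only [List.length_cons, Nat.succ.injEq] at hlen
      rw [wordVal_cons, wordVal_cons, hlen] at hv
      have hlt1 : wordVal m l1 < m ^ l2.length := by
        rw [← hlen]; exact wordVal_lt m hm l1 fun d hd => h1 d (by simp [hd])
      have hlt2 : wordVal m l2 < m ^ l2.length :=
        wordVal_lt m hm l2 fun d hd => h2 d (by simp [hd])
      have hab : a = b := by
        rcases Nat.lt_trichotomy a b with h | h | h
        · nlinarith [Nat.mul_le_mul_right (m ^ l2.length) (Nat.succ_le_of_lt h)]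
        · exact h
        · nlinarith [Nat.mul_le_mul_right (m ^ l2.length) (Nat.succ_le_of_lt h)]
      subst hab
      have : wordVal m l1 = wordVal m l2 := by omega
      rw [ih l2 (fun d hd => h1 d (by simp [hd])) (fun d hd => h2 d (by simp [hd])) hlen this]

lemma prefix_iff_val (m : ℕ) (hm : 1 ≤ m) (v s : List ℕ) (hv : ∀ d ∈ v, d < m)
    (hs : ∀ d ∈ s, d < m) (ht : v.length ≤ s.length) :
    v <+: s ↔ wordVal m v * m ^ (s.length - v.length) ≤ wordVal m s ∧
      wordVal m s < (wordVal m v + 1) * m ^ (s.length - v.length) := by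
  constructor
  · rintro ⟨u, rfl⟩
    have hu : wordVal m u < m ^ u.length :=
      wordVal_lt m hm u fun d hd => hs d (by simp [hd])
    rw [wordVal_append]
    have hl : (v ++ u).length - v.length = u.length := by simp
    rw [hl]
    constructor
    · omega
    · rw [add_one_mul]; omega
  · rintro ⟨h1, h2⟩
    set t := v.length with htdef
    have hsplit : s = s.take t ++ s.drop t := (List.take_append_drop t s).symm
    have hlen : (s.take t).length = t := List.length_take_of_le ht
    have hdlen : (s.drop t).length = s.length - t := List.length_drop
    have hval : wordVal m s = wordVal m (s.take t) * m ^ (s.length - t) + wordVal m (s.drop t) := by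
      conv_lhs => rw [hsplit]
      rw [wordVal_append, hdlen]
    have hu : wordVal m (s.drop t) < m ^ (s.length - t) := by
      rw [← hdlen]
      exact wordVal_lt m hm _ fun d hd => hs d (List.mem_of_mem_drop hd)
    have heq : wordVal m (s.take t) = wordVal m v := by
      set M := m ^ (s.length - t)
      have hM : 0 < M := Nat.pow_pos hm
      nlinarith [Nat.lt_trichotomy (wordVal m (s.take t)) (wordVal m v)]
    have hvt : v = s.take t :=
      wordVal_inj m hm v (s.take t) hv (fun d hd => hs d (List.mem_of_mem_take hd))
        hlen.symm heq.symm
    rw [hvt]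
    exact List.take_prefix t s

lemma occCount_cons (w : List ℕ) (a : ℕ) (x : List ℕ) :
    occCount w (a :: x) = (if w <+: a :: x then 1 else 0) + occCount w x := by
  have h1 : (a :: x).length + 1 = x.length + 1 + 1 := by simp
  rw [occCount, h1, List.range_succ_eq_map, List.countP_cons, List.countP_map]
  simp only [Function.comp_def, List.drop_succ_cons, List.drop_zero, occCount]
  by_cases hp : w <+: a :: x <;> simp [hp, Nat.add_comm]

lemma prefix_zero_headI {w s : List ℕ} (h : w <+: 0 :: s) : w.headI = 0 := by
  cases w with
  | nil => rfl
  | cons a t => exact (List.cons_prefix_cons.mp h).1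

lemma occCount_replicate_zero_append (w : List ℕ) (hw : w.headI ≠ 0) (z : ℕ) (x : List ℕ) :
    occCount w (List.replicate z 0 ++ x) = occCount w x := by
  induction z with
  | zero => simp
  | succ z ih =>
    rw [List.replicate_succ, List.cons_append, occCount_cons, ih, if_neg, Nat.zero_add]
    intro h
    exact hw (prefix_zero_headI h)

lemma digits_len_le_of_lt_pow {m r k : ℕ} (hm : 2 ≤ m) (hr : r < m ^ k) :
    (Nat.digits m r).length ≤ k := by
  by_contra h
  push_neg at h
  rcases Nat.eq_zero_or_pos r with rfl | hr0
  · simp at h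
  · have h1 : m ^ (Nat.digits m r).length ≤ m * r :=
      Nat.base_pow_length_digits_le m r (by omega) (by omega)
    have h2 : m ^ (k + 1) ≤ m ^ (Nat.digits m r).length :=
      Nat.pow_le_pow_right (by omega) h
    rw [pow_succ'] at h2
    have : m ^ k ≤ r := Nat.le_of_mul_le_mul_left (le_trans h2 h1) (by omega)
    omega

lemma ofDigits_replicate_zero' (m z : ℕ) : Nat.ofDigits m (List.replicate z 0) = 0 := by
  rw [← wordVal_reverse, List.reverse_replicate, wordVal_replicate_zero]

theorem stmt1 (m y k r : ℕ) (w : List ℕ) (hm : 2 ≤ m)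
    (hy : 1 ≤ y) (hy' : y < m) (hw : ∀ d ∈ w, d < m) (hhead : w.headI ≠ 0)
    (hr : r < m ^ k) (hk : w.length ≤ k) :
    eCount m w (r + y * m ^ k) = eCount m w r + 1 ↔
      y = w.headI ∧
        wordVal m w.tail * m ^ (k - (w.length - 1)) ≤ r ∧
          r < (wordVal m w.tail + 1) * m ^ (k - (w.length - 1)) := by
  obtain ⟨h, t, rfl⟩ : ∃ h t, w = h :: t := by
    cases w with
    | nil => simp at hhead
    | cons a b => exact ⟨a, b, rfl⟩
  simp only [List.headI_cons] at hhead ⊢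
  simp only [List.tail_cons, List.length_cons, Nat.add_sub_cancel]
  set L := Nat.digits m r with hL
  have hLlen : L.length ≤ k := digits_len_le_of_lt_pow hm hr
  set z := k - L.length with hz
  set pad := List.replicate z 0 ++ L.reverse with hpad
  have hm1 : (1:ℕ) < m := by omega
  have hhead' : (h :: t).headI ≠ 0 := by simpa using hhead
  -- digits of r + y * m^k
  have hdig : Nat.digits m (r + y * m ^ k) = L ++ List.replicate z 0 ++ [y] := by
    have hd := Nat.digits_ofDigits m hm1 (L ++ List.replicate z 0 ++ [y])
      (by
        intro d hd
        simp only [List.mem_append, List.mem_replicate, List.mem_singleton] at hd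
        rcases hd with (hd | hd) | hd
        · exact Nat.digits_lt_base hm1 hd
        · omega
        · omega)
      (by
        intro _
        rw [List.getLast_append]
        simp
        omega)
    rw [← hd]
    congr 1
    rw [Nat.ofDigits_append, Nat.ofDigits_append, Nat.ofDigits_digits,
      ofDigits_replicate_zero', Nat.ofDigits_singleton]
    simp only [List.length_append, List.length_replicate]
    have hlk : L.length + z = k := by omega
    rw [hlk, Nat.mul_zero, Nat.add_zero]
    ring
  have hne : r + y * m ^ k ≠ 0 := by
    have : 0 < m ^ k := Nat.pow_pos (by omega)
    nlinarith
  have hbase : baseExp m (r + y * m ^ k) = y :: pad := by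
    rw [baseExp, if_neg hne, hdig]
    simp [hpad, List.reverse_append]
  -- eCount of r equals occCount on pad
  have hEr : eCount m (h :: t) r = occCount (h :: t) pad := by
    rcases Nat.eq_zero_or_pos r with rfl | hr0
    · have hL0 : L = [] := by simp [hL]
      rw [eCount, baseExp, if_pos rfl, hpad, hL0]
      simp only [List.reverse_nil, List.append_nil]
      have h1 : occCount (h :: t) ([0] : List ℕ) = occCount (h :: t) [] := by
        have := occCount_replicate_zero_append (h :: t) hhead' 1 []
        simpa using this
      have h2 : occCount (h :: t) (List.replicate z 0) = occCount (h :: t) [] := by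
        have := occCount_replicate_zero_append (h :: t) hhead' z []
        simpa using this
      rw [h1, h2]
    · rw [eCount, baseExp, if_neg (by omega), hpad]
      rw [occCount_replicate_zero_append _ hhead']
  -- pad facts
  have hpadlen : pad.length = k := by simp [hpad]; omega
  have hpadlt : ∀ d ∈ pad, d < m := by
    intro d hd
    simp only [hpad, List.mem_append, List.mem_replicate, List.mem_reverse] at hd
    rcases hd with hd | hd
    · omega
    · exact Nat.digits_lt_base hm1 hd
  have hpadval : wordVal m pad = r := by
    rw [hpad, wordVal_append, wordVal_replicate_zero, wordVal_reverse, Nat.ofDigits_digits]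
    ring
  -- main computation
  have hLHS : eCount m (h :: t) (r + y * m ^ k) =
      (if (h :: t) <+: y :: pad then 1 else 0) + eCount m (h :: t) r := by
    rw [eCount, hbase, occCount_cons, hEr]
  rw [hLHS]
  have htk : t.length ≤ pad.length := by
    rw [hpadlen]
    simp only [List.length_cons] at hk
    omega
  have hpre : ((h :: t) <+: y :: pad) ↔ (y = h ∧ t <+: pad) := by
    rw [List.cons_prefix_cons]
    constructor
    · rintro ⟨rfl, h2⟩; exact ⟨rfl, h2⟩
    · rintro ⟨rfl, h2⟩; exact ⟨rfl, h2⟩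
  have ht_iff := prefix_iff_val m (by omega) t pad
    (fun d hd => hw d (by simp [hd])) hpadlt htk
  rw [hpadlen, hpadval] at ht_iff
  constructor
  · intro heq
    by_cases hc : (h :: t) <+: y :: pad
    · obtain ⟨hy2, hp2⟩ := hpre.mp hc
      exact ⟨hy2, ht_iff.mp hp2⟩
    · rw [if_neg hc] at heq
      omega
  · rintro ⟨hy2, h1, h2⟩
    have hp : (h :: t) <+: y :: pad := hpre.mpr ⟨hy2, ht_iff.mpr ⟨h1, h2⟩⟩
    rw [if_pos hp]
    omega
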